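/- Let X be a real Banach space and A ⊆ X a bounded subset. Then A is a Banach–Saks set, i.e., every sequence in A has a Cesàro convergent subsequence, if and only if every sequence in A has a subsequence that converges uniformly weakly to some point of X. -/

import Mathlib

open Filter Topology

/-- A sequence `(xₙ)` in a real Banach space converges uniformly weakly to `x` if for every
`ε > 0` there is `N ∈ ℕ` such that `{n : |x*(xₙ - x)| > ε}` has at most `N` elements for every
`x*` in the closed unit ball of the dual. -/
def UnifWeaklyConvergent {X : Type*} [NormedAddCommGroup X] [NormedSpace ℝ X]
    (x : ℕ → X) (l : X) : Prop :=
  ∀ ε : ℝ, 0 < ε → ∃ N : ℕ, ∀ f : X →L[ℝ] ℝ, ‖f‖ ≤ 1 →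
    {n : ℕ | ε < |f (x n - l)|}.encard ≤ (N : ℕ∞)

/-- A sequence is Cesàro convergent to `l` if its arithmetic means converge in norm to `l`. -/
def CesaroConvergent {X : Type*} [NormedAddCommGroup X] [NormedSpace ℝ X]
    (x : ℕ → X) (l : X) : Prop :=
  Tendsto (fun n : ℕ => (n : ℝ)⁻¹ • ∑ k ∈ Finset.range n, x k) atTop (nhds l)


open Filter Topology

namespace BS5

noncomputable def enum (A : Set ℕ) : ℕ → ℕ := Nat.nth (· ∈ A)

/-- `t` is a (finite) initial segment of `A`. -/
def IsInit (t : Finset ℕ) (A : Set ℕ) : Prop :=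
  ↑t ⊆ A ∧ ∀ a ∈ A, a ∉ t → ∀ b ∈ t, b < a

def cube (s : Finset ℕ) (M : Set ℕ) : Set (Set ℕ) :=
  {A | A.Infinite ∧ IsInit s A ∧ A ⊆ ↑s ∪ M}

lemma enum_strictMono {A : Set ℕ} (hA : A.Infinite) : StrictMono (enum A) :=
  Nat.nth_strictMono hA

lemma enum_mem {A : Set ℕ} (hA : A.Infinite) (n : ℕ) : enum A n ∈ A :=
  Nat.nth_mem_of_infinite hA n

lemma isInit_empty (A : Set ℕ) : IsInit ∅ A := by
  constructor <;> simp

/-- the first `m` elements of an infinite set. -/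
noncomputable def firstSeg (A : Set ℕ) (m : ℕ) : Finset ℕ :=
  (Finset.range m).image (enum A)

lemma card_firstSeg {A : Set ℕ} (hA : A.Infinite) (m : ℕ) : (firstSeg A m).card = m := by
  rw [firstSeg, Finset.card_image_of_injective _ (enum_strictMono hA).injective,
    Finset.card_range]

lemma isInit_firstSeg {A : Set ℕ} (hA : A.Infinite) (m : ℕ) : IsInit (firstSeg A m) A := by
  classical
  constructor
  · intro a ha
    simp only [firstSeg, Finset.coe_image, Set.mem_image] at ha
    obtain ⟨k, -, rfl⟩ := ha
    exact enum_mem hA k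
  · intro a haA hat b hb
    simp only [firstSeg, Finset.mem_image, Finset.mem_range] at hb hat
    obtain ⟨i, hi, rfl⟩ := hb
    have hca : Nat.nth (· ∈ A) (Nat.count (· ∈ A) a) = a := Nat.nth_count haA
    have : m ≤ Nat.count (· ∈ A) a := by
      by_contra h
      exact hat ⟨_, Nat.lt_of_not_le h, hca⟩
    calc enum A i < enum A (Nat.count (· ∈ A) a) := (enum_strictMono hA) (lt_of_lt_of_le hi this)
      _ = a := hca

lemma mem_init_of_le {t : Finset ℕ} {A : Set ℕ} (ht : IsInit t A) {a b : ℕ}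
    (ha : a ∈ A) (hb : b ∈ t) (hab : a ≤ b) : a ∈ t := by
  by_contra h
  exact absurd (ht.2 a ha h b hb) (not_lt.2 hab)

/-- two initial segments of the same set are comparable; same card implies equal -/
lemma init_subset_init {t u : Finset ℕ} {A : Set ℕ} (ht : IsInit t A) (hu : IsInit u A)
    (h : t.card ≤ u.card) : t ⊆ u := by
  by_contra hsub
  obtain ⟨a, hat, hau⟩ := Finset.not_subset.1 hsub
  have husub : u ⊆ t := by
    intro x hx
    exact mem_init_of_le ht (hu.1 hx) hat (le_of_lt (hu.2 a (ht.1 hat) hau x hx))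
  have : u ⊂ t := ⟨husub, fun h' => hau (h' hat)⟩
  exact absurd h (not_le.2 (Finset.card_lt_card this))

lemma init_eq_init {t u : Finset ℕ} {A : Set ℕ} (ht : IsInit t A) (hu : IsInit u A)
    (h : t.card = u.card) : t = u :=
  Finset.eq_of_subset_of_card_le (init_subset_init ht hu h.le) h.ge

lemma init_union {t u : Finset ℕ} {A : Set ℕ} (ht : IsInit t A) (hu : IsInit u A) :
    IsInit (t ∪ u) A := by
  rcases le_total t.card u.card with h | h
  · rwa [Finset.union_eq_right.2 (init_subset_init ht hu h)]
  · rwa [Finset.union_eq_left.2 (init_subset_init hu ht h)]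

/-- key agreement lemma: if `t` is an initial segment of both infinite sets `A` and `B`,
their enumerations agree below `t.card`. -/
lemma enum_eq_of_isInit {t : Finset ℕ} {A B : Set ℕ} (hA : A.Infinite) (hB : B.Infinite)
    (htA : IsInit t A) (htB : IsInit t B) {j : ℕ} (hj : j < t.card) :
    enum A j = enum B j := by
  classical
  have key : ∀ (C : Set ℕ), C.Infinite → IsInit t C → ∀ i < t.card, enum C i ∈ t := by
    intro C hC htC i hi
    have : firstSeg C t.card = t :=
      init_eq_init (isInit_firstSeg hC _) htC (card_firstSeg hC _)
    rw [← this]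
    exact Finset.mem_image.2 ⟨i, Finset.mem_range.2 hi, rfl⟩
  have heA : enum A j ∈ t := key A hA htA j hj
  have heB : enum A j ∈ B := htB.1 heA
  have hcount : Nat.count (· ∈ B) (enum A j) = Nat.count (· ∈ A) (enum A j) := by
    rw [Nat.count_eq_card_filter_range, Nat.count_eq_card_filter_range]
    congr 1
    apply Finset.filter_congr
    intro x hx
    simp only [Finset.mem_range] at hx
    constructor
    · intro hxB
      have : x ∈ t := mem_init_of_le htB hxB heA hx.le
      exact htA.1 this
    · intro hxA
      have : x ∈ t := mem_init_of_le htA hxA heA hx.le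
      exact htB.1 this
  have h2 : Nat.count (· ∈ A) (enum A j) = j := by
    simpa [enum] using Nat.count_nth_of_infinite (p := (· ∈ A)) hA j
  have : Nat.nth (· ∈ B) (Nat.count (· ∈ B) (enum A j)) = enum A j := Nat.nth_count heB
  rw [hcount, h2] at this
  exact this.symm

lemma enum_range_strictMono {f : ℕ → ℕ} (hf : StrictMono f) : enum (Set.range f) = f := by
  classical
  funext n
  have hcount : Nat.count (· ∈ Set.range f) (f n) = n := by
    rw [Nat.count_eq_card_filter_range]
    have : {x ∈ Finset.range (f n) | x ∈ Set.range f} = (Finset.range n).image f := by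
      ext x
      simp only [Finset.mem_filter, Finset.mem_range, Set.mem_range, Finset.mem_image]
      constructor
      · rintro ⟨hx, k, rfl⟩
        exact ⟨k, hf.lt_iff_lt.1 hx, rfl⟩
      · rintro ⟨k, hk, rfl⟩
        exact ⟨hf hk, k, rfl⟩
    rw [this, Finset.card_image_of_injective _ hf.injective, Finset.card_range]
  have := Nat.nth_count (p := (· ∈ Set.range f)) (Set.mem_range_self n)
  rw [hcount] at this
  exact this

end BS5

namespace BS5

/-- Ellentuck-style open family -/
def EOpen (U : Set (Set ℕ)) : Prop :=
  ∀ A ∈ U, ∃ t, IsInit t A ∧ cube t (A \ ↑t) ⊆ U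

/-- Ramsey null family -/
def RNull (𝒩 : Set (Set ℕ)) : Prop :=
  ∀ (s : Finset ℕ) (M : Set ℕ), M.Infinite →
    ∃ N, N ⊆ M ∧ N.Infinite ∧ cube s N ∩ 𝒩 = ∅

lemma cube_mono {s : Finset ℕ} {M M' : Set ℕ} (h : M ⊆ M') : cube s M ⊆ cube s M' :=
  fun _ hA => ⟨hA.1, hA.2.1, hA.2.2.trans (Set.union_subset_union_right _ h)⟩

lemma above_infinite (s : Finset ℕ) {M : Set ℕ} (hM : M.Infinite) :
    ({x ∈ M | ∀ b ∈ s, b < x} : Set ℕ).Infinite := by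
  have : {x ∈ M | ∀ b ∈ s, b < x} = M \ {x | ∃ b ∈ s, x ≤ b} := by
    ext x
    simp only [Set.mem_setOf_eq, Set.mem_diff]
    push_neg
    tauto
  rw [this]
  apply hM.diff
  apply Set.Finite.subset (Set.finite_Iic (s.sup id))
  rintro x ⟨b, hb, hxb⟩
  exact hxb.trans (Finset.le_sup (f := id) hb)

lemma tail_infinite {N : Set ℕ} (hN : N.Infinite) (a : ℕ) : (N \ Set.Iic a).Infinite :=
  hN.diff (Set.finite_Iic a)

lemma cube_subset_union_above {t : Finset ℕ} {N : Set ℕ} :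
    cube t N ⊆ cube t {x ∈ N | ∀ c ∈ t, c < x} := by
  rintro A ⟨h1, h2, h3⟩
  refine ⟨h1, h2, fun x hx => ?_⟩
  rcases h3 hx with hxt | hxN
  · exact Or.inl hxt
  · by_cases hxt' : x ∈ t
    · exact Or.inl hxt'
    · exact Or.inr ⟨hxN, fun c hc => h2.2 x hx hxt' c hc⟩

section Forcing

variable (U : Set (Set ℕ))

def acc (s : Finset ℕ) (M : Set ℕ) : Prop := cube s M ⊆ U

def rej (s : Finset ℕ) (M : Set ℕ) : Prop :=
  ∀ N, N ⊆ M → N.Infinite → ¬ acc U s N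

variable {U}

lemma acc_mono {s : Finset ℕ} {M N : Set ℕ} (h : N ⊆ M) (ha : acc U s M) : acc U s N :=
  (cube_mono h).trans ha

lemma rej_mono {s : Finset ℕ} {M N : Set ℕ} (h : N ⊆ M) (hr : rej U s M) : rej U s N :=
  fun N' hN' => hr N' (hN'.trans h)

lemma rej_superset {t : Finset ℕ} {M N : Set ℕ} (hr : rej U t M)
    (h : {x ∈ N | ∀ c ∈ t, c < x} ⊆ M) : rej U t N := by
  intro N' hN' hN'inf hacc
  refine hr {x ∈ N' | ∀ c ∈ t, c < x} (fun x hx => h ⟨hN' hx.1, hx.2⟩) ?_ ?_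
  · have : {x ∈ N' | ∀ c ∈ t, c < x} = N' \ {x | ∃ b ∈ t, x ≤ b} := by
      ext x; simp only [Set.mem_setOf_eq, Set.mem_diff]; push_neg; tauto
    rw [this]
    apply hN'inf.diff
    apply Set.Finite.subset (Set.finite_Iic (t.sup id))
    rintro x ⟨b, hb, hxb⟩
    exact hxb.trans (Finset.le_sup (f := id) hb)
  · exact acc_mono (fun x hx => hx.1) hacc

lemma exists_decide (s : Finset ℕ) (M : Set ℕ) (hM : M.Infinite) :
    ∃ N, N ⊆ M ∧ N.Infinite ∧ (acc U s N ∨ rej U s N) := by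
  by_cases h : ∃ N, N ⊆ M ∧ N.Infinite ∧ acc U s N
  · obtain ⟨N, h1, h2, h3⟩ := h
    exact ⟨N, h1, h2, Or.inl h3⟩
  · push_neg at h
    exact ⟨M, subset_rfl, hM, Or.inr (fun N h1 h2 h3 => h N h1 h2 h3)⟩

end Forcing

/-- general fusion lemma -/
lemma fusion {D : Finset ℕ → Set ℕ → Prop} {M₀ : Set ℕ} (h0 : D ∅ M₀)
    (hstep : ∀ F M, D F M →
      ∃ a, a ∈ M ∧ ∃ M', M' ⊆ M ∧ (∀ b ∈ M', a < b) ∧ D (insert a F) M') :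
    ∃ (a : ℕ → ℕ) (Ms : ℕ → Set ℕ), StrictMono a ∧
      (∀ k, D (Finset.image a (Finset.range k)) (Ms k)) ∧
      (∀ k j, k ≤ j → a j ∈ Ms k) := by
  classical
  choose af ham aM hsub hgt hD using hstep
  set g : ℕ → {q : Finset ℕ × Set ℕ // D q.1 q.2} := fun k =>
    Nat.rec ⟨(∅, M₀), h0⟩
      (fun _ p => ⟨(insert (af p.1.1 p.1.2 p.2) p.1.1, aM p.1.1 p.1.2 p.2), hD _ _ _⟩) k
    with hg
  set a : ℕ → ℕ := fun k => af (g k).1.1 (g k).1.2 (g k).2 with ha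
  set Ms : ℕ → Set ℕ := fun k => (g k).1.2 with hMs
  have hgsucc : ∀ k, (g (k + 1)).1 = (insert (a k) (g k).1.1, aM (g k).1.1 (g k).1.2 (g k).2) :=
    fun k => rfl
  have hFk : ∀ k, (g k).1.1 = Finset.image a (Finset.range k) := by
    intro k
    induction k with
    | zero => simp [hg]
    | succ n ih =>
      rw [Finset.range_add_one, Finset.image_insert, ← ih]
  have hmem : ∀ k, a k ∈ Ms k := fun k => ham _ _ _
  have hMsucc : ∀ k, Ms (k + 1) = aM (g k).1.1 (g k).1.2 (g k).2 := fun k => rfl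
  have hMsub : ∀ k, Ms (k + 1) ⊆ Ms k := by
    intro k; rw [hMsucc k]; exact hsub _ _ _
  have hMgt : ∀ k, ∀ b ∈ Ms (k + 1), a k < b := by
    intro k; rw [hMsucc k]; exact hgt _ _ _
  have hanti : ∀ k j, k ≤ j → Ms j ⊆ Ms k := by
    intro k j hkj
    induction j with
    | zero => rw [Nat.le_zero.1 hkj]
    | succ n ih =>
      rcases Nat.lt_or_ge k (n + 1) with h | h
      · exact (hMsub n).trans (ih (Nat.lt_succ_iff.1 h))
      · rw [Nat.le_antisymm hkj h]
  have hamem : ∀ k j, k ≤ j → a j ∈ Ms k := fun k j hkj => hanti k j hkj (hmem j)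
  refine ⟨a, Ms, ?_, ?_, hamem⟩
  · apply strictMono_nat_of_lt_succ
    intro k
    exact hMgt k (a (k + 1)) (hamem (k + 1) (k + 1) le_rfl)
  · intro k
    have := (g k).2
    rwa [hFk k] at this

lemma shrink_list {ι : Type*} {Q : ι → Set ℕ → Prop}
    (hmono : ∀ i N N', N' ⊆ N → Q i N → Q i N') (l : List ι) :
    ∀ M : Set ℕ, M.Infinite →
      (∀ i ∈ l, ∀ M', M' ⊆ M → M'.Infinite → ∃ N, N ⊆ M' ∧ N.Infinite ∧ Q i N) →
      ∃ N, N ⊆ M ∧ N.Infinite ∧ ∀ i ∈ l, Q i N := by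
  induction l with
  | nil =>
    intro M hM _
    exact ⟨M, subset_rfl, hM, by simp⟩
  | cons i l ih =>
    intro M hM h
    obtain ⟨N, hNM, hNinf, hQ⟩ := ih M hM (fun j hj => h j (List.mem_cons_of_mem i hj))
    obtain ⟨N', hN'N, hN'inf, hQ'⟩ := h i List.mem_cons_self N hNM hNinf
    refine ⟨N', hN'N.trans hNM, hN'inf, ?_⟩
    intro j hj
    rcases List.mem_cons.1 hj with rfl | hj
    · exact hQ'
    · exact hmono j N N' hN'N (hQ j hj)

end BS5

namespace BS5

lemma mem_cube_elim {s : Finset ℕ} {N A : Set ℕ} (hA : A ∈ cube s N) {x : ℕ}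
    (hx : x ∈ A) (hxs : x ∉ s) : x ∈ N := by
  rcases hA.2.2 hx with h | h
  · exact absurd (Finset.mem_coe.1 h) hxs
  · exact h

lemma isInit_insert_sInf {s : Finset ℕ} {A : Set ℕ} (h : IsInit s A)
    (hne : (A \ ↑s).Nonempty) : IsInit (insert (sInf (A \ ↑s)) s) A := by
  have hm : sInf (A \ ↑s) ∈ A \ ↑s := Nat.sInf_mem hne
  constructor
  · intro b hb
    rcases Finset.mem_insert.1 (Finset.mem_coe.1 hb) with rfl | hb'
    · exact hm.1
    · exact h.1 (Finset.mem_coe.2 hb')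
  · intro b hbA hbt c hc
    have hbs : b ∉ s := fun hh => hbt (Finset.mem_insert.2 (Or.inr hh))
    have hbm : b ≠ sInf (A \ ↑s) := fun hh => hbt (Finset.mem_insert.2 (Or.inl hh))
    rcases Finset.mem_insert.1 hc with rfl | hc'
    · exact lt_of_le_of_ne (Nat.sInf_le ⟨hbA, fun hh => hbs (Finset.mem_coe.1 hh)⟩) (Ne.symm hbm)
    · exact h.2 b hbA hbs c hc'

variable {U : Set (Set ℕ)}

/-- if `M` rejects `s`, some infinite subset rejects all one-point extensions by its elements -/
lemma step3 {s : Finset ℕ} {M : Set ℕ} (hM : M.Infinite) (hrej : rej U s M) :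
    ∃ N, N ⊆ M ∧ N.Infinite ∧ ∀ a ∈ N, rej U (insert a s) N := by
  classical
  set D : Finset ℕ → Set ℕ → Prop := fun F M' =>
    M'.Infinite ∧ M' ⊆ M ∧ ∀ c ∈ F, (acc U (insert c s) M' ∨ rej U (insert c s) M') with hD
  have h0 : D ∅ M := ⟨hM, subset_rfl, by simp⟩
  have hstep : ∀ F M', D F M' →
      ∃ a, a ∈ M' ∧ ∃ M'', M'' ⊆ M' ∧ (∀ b ∈ M'', a < b) ∧ D (insert a F) M'' := by
    rintro F M' ⟨hinf, hsubM, hdec⟩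
    have haM : sInf M' ∈ M' := Nat.sInf_mem hinf.nonempty
    have htail : (M' \ Set.Iic (sInf M')).Infinite := tail_infinite hinf _
    obtain ⟨M'', h1, h2, h3⟩ := exists_decide (U := U) (insert (sInf M') s) _ htail
    have hM''M' : M'' ⊆ M' := h1.trans Set.diff_subset
    refine ⟨sInf M', haM, M'', hM''M', ?_, h2, hM''M'.trans hsubM, ?_⟩
    · intro b hb
      have := (h1 hb).2
      simpa using this
    · intro c hc
      rcases Finset.mem_insert.1 hc with rfl | hc
      · exact h3
      · rcases hdec c hc with h | h
        · exact Or.inl (acc_mono hM''M' h)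
        · exact Or.inr (rej_mono hM''M' h)
  obtain ⟨a, Ms, hmono, hDk, hamem⟩ := fusion h0 hstep
  have hMsM : ∀ k, Ms k ⊆ M := fun k => (hDk k).2.1
  have hdec : ∀ k, acc U (insert (a k) s) (Ms (k + 1)) ∨ rej U (insert (a k) s) (Ms (k + 1)) :=
    fun k => (hDk (k + 1)).2.2 (a k)
      (Finset.mem_image.2 ⟨k, Finset.mem_range.2 (Nat.lt_succ_self k), rfl⟩)
  have hJinf : {k | rej U (insert (a k) s) (Ms (k + 1))}.Infinite := by
    by_contra hfin
    rw [Set.not_infinite] at hfin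
    obtain ⟨K, hK⟩ := hfin.bddAbove
    have hacc : ∀ k, K + 1 ≤ k → acc U (insert (a k) s) (Ms (k + 1)) := by
      intro k hk
      rcases hdec k with h | h
      · exact h
      · exact absurd (hK h) (by omega)
    have hN''M : a '' {k | K + 1 ≤ k} ⊆ M := by
      rintro x ⟨k, _, rfl⟩
      exact hMsM k (hamem k k le_rfl)
    have hN''inf : (a '' {k | K + 1 ≤ k}).Infinite :=
      (Set.Ici_infinite (K + 1)).image (Set.injOn_of_injective hmono.injective)
    refine hrej _ hN''M hN''inf ?_
    intro A hA
    have hAinf : A.Infinite := hA.1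
    have hAdiff : (A \ ↑s).Infinite := hAinf.diff s.finite_toSet
    have hmA : sInf (A \ ↑s) ∈ A \ ↑s := Nat.sInf_mem hAdiff.nonempty
    obtain ⟨k₀, hk₀K, hk₀⟩ := mem_cube_elim hA hmA.1 (fun h => hmA.2 (Finset.mem_coe.2 h))
    have hcube : A ∈ cube (insert (a k₀) s) (Ms (k₀ + 1)) := by
      rw [hk₀]
      refine ⟨hAinf, isInit_insert_sInf hA.2.1 hAdiff.nonempty, ?_⟩
      intro x hx
      by_cases hxs : x ∈ s
      · exact Or.inl (by simp [hxs])
      · obtain ⟨j, hjK, rfl⟩ := mem_cube_elim hA hx hxs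
        by_cases hxm : a j = sInf (A \ ↑s)
        · exact Or.inl (by simp [hxm])
        · have hlt : sInf (A \ ↑s) < a j :=
            lt_of_le_of_ne (Nat.sInf_le ⟨hx, fun hh => hxs (Finset.mem_coe.1 hh)⟩)
              (Ne.symm hxm)
          rw [← hk₀] at hlt
          have hj : k₀ + 1 ≤ j := hmono.lt_iff_lt.1 hlt
          exact Or.inr (hamem (k₀ + 1) j hj)
    exact hacc k₀ hk₀K hcube
  set N := a '' {k | rej U (insert (a k) s) (Ms (k + 1))} with hN
  refine ⟨N, ?_, hJinf.image (Set.injOn_of_injective hmono.injective), ?_⟩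
  · rintro x ⟨k, _, rfl⟩
    exact hMsM k (hamem k k le_rfl)
  · rintro b ⟨k, hk, rfl⟩
    refine rej_superset hk ?_
    rintro x ⟨⟨j, _, rfl⟩, hx2⟩
    have : a k < a j := hx2 (a k) (Finset.mem_insert_self _ _)
    exact hamem (k + 1) j (hmono.lt_iff_lt.1 this)

end BS5

namespace BS5

variable {U : Set (Set ℕ)}

lemma cube_of_init_subset {t₀ t : Finset ℕ} {A : Set ℕ} (ht₀ : IsInit t₀ A)
    (ht : IsInit t A) (hsub : t₀ ⊆ t) : cube t (A \ ↑t) ⊆ cube t₀ (A \ ↑t₀) := by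
  rintro B ⟨hBinf, hBt, hBsub⟩
  refine ⟨hBinf, ⟨fun b hb => hBt.1 (Finset.coe_subset.2 hsub hb), ?_⟩, ?_⟩
  · intro b hbB hbt₀ c hc
    rcases hBsub hbB with hbt | hbA
    · exact ht₀.2 b (ht.1 hbt) hbt₀ c hc
    · exact ht₀.2 b hbA.1 hbt₀ c hc
  · intro b hb
    rcases hBsub hb with hbt | hbA
    · by_cases hbt₀ : b ∈ ↑t₀
      · exact Or.inl hbt₀
      · exact Or.inr ⟨ht.1 hbt, hbt₀⟩
    · by_cases hbt₀ : b ∈ ↑t₀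
      · exact Or.inl hbt₀
      · exact Or.inr ⟨hbA.1, hbt₀⟩

/-- The Galvin–Prikry lemma for Ellentuck-open families. -/
lemma galvin (hU : EOpen U) (s : Finset ℕ) (M : Set ℕ) (hM : M.Infinite) :
    ∃ N, N ⊆ M ∧ N.Infinite ∧ (cube s N ⊆ U ∨ cube s N ∩ U = ∅) := by
  classical
  by_cases hex : ∃ N, N ⊆ M ∧ N.Infinite ∧ acc U s N
  · obtain ⟨N, h1, h2, h3⟩ := hex
    exact ⟨N, h1, h2, Or.inl h3⟩
  push_neg at hex
  have hrej : rej U s M := fun N h1 h2 h3 => hex N h1 h2 h3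
  set M₀ : Set ℕ := {x ∈ M | ∀ b ∈ s, b < x} with hM₀
  have hM₀inf : M₀.Infinite := above_infinite s hM
  have hM₀M : M₀ ⊆ M := fun x hx => hx.1
  set D : Finset ℕ → Set ℕ → Prop := fun F M' =>
    M'.Infinite ∧ M' ⊆ M₀ ∧ ∀ t : Finset ℕ, s ⊆ t → t ⊆ s ∪ F → rej U t M' with hDdef
  have h0 : D ∅ M₀ := by
    refine ⟨hM₀inf, subset_rfl, ?_⟩
    intro t hst hts
    have : t = s := Finset.Subset.antisymm (by simpa using hts) hst
    rw [this]
    exact rej_mono hM₀M hrej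
  have hstep : ∀ F M', D F M' →
      ∃ a, a ∈ M' ∧ ∃ M'', M'' ⊆ M' ∧ (∀ b ∈ M'', a < b) ∧ D (insert a F) M'' := by
    rintro F M' ⟨hinf, hsubM₀, hrejt⟩
    set Q : Finset ℕ → Set ℕ → Prop := fun t N => s ⊆ t → ∀ a ∈ N, rej U (insert a t) N with hQ
    have hmono : ∀ t N N', N' ⊆ N → Q t N → Q t N' := by
      intro t N N' hsub hq hst a ha
      exact rej_mono hsub (hq hst a (hsub ha))
    have htask : ∀ t ∈ (s ∪ F).powerset.toList, ∀ M'', M'' ⊆ M' → M''.Infinite →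
        ∃ N, N ⊆ M'' ∧ N.Infinite ∧ Q t N := by
      intro t htl M'' hsub hM''inf
      by_cases hst : s ⊆ t
      · have hts : t ⊆ s ∪ F := Finset.mem_powerset.1 (Finset.mem_toList.1 htl)
        obtain ⟨N, h1, h2, h3⟩ := step3 hM''inf (rej_mono hsub (hrejt t hst hts))
        exact ⟨N, h1, h2, fun _ => h3⟩
      · exact ⟨M'', subset_rfl, hM''inf, fun h => absurd h hst⟩
    obtain ⟨N', hN'M', hN'inf, hN'Q⟩ := shrink_list hmono _ M' hinf htask
    have haN' : sInf N' ∈ N' := Nat.sInf_mem hN'inf.nonempty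
    have has : sInf N' ∉ s := by
      intro hcon
      have := (hsubM₀ (hN'M' haN')).2 _ hcon
      omega
    refine ⟨sInf N', hN'M' haN', N' \ Set.Iic (sInf N'), (Set.diff_subset).trans hN'M', ?_,
      tail_infinite hN'inf _, ((Set.diff_subset).trans hN'M').trans hsubM₀, ?_⟩
    · intro b hb
      have := hb.2
      simpa using this
    · intro t hst hts
      by_cases hat : sInf N' ∈ t
      · have hst' : s ⊆ t.erase (sInf N') := Finset.subset_erase.2 ⟨hst, has⟩
        have hterase : t.erase (sInf N') ∈ (s ∪ F).powerset.toList := by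
          rw [Finset.mem_toList, Finset.mem_powerset]
          intro x hx
          have hxt : x ∈ t := Finset.mem_of_mem_erase hx
          have hxne : x ≠ sInf N' := Finset.ne_of_mem_erase hx
          rcases Finset.mem_union.1 (hts hxt) with h | h
          · exact Finset.mem_union_left _ h
          · rcases Finset.mem_insert.1 h with h' | h'
            · exact absurd h' hxne
            · exact Finset.mem_union_right _ h'
        have := hN'Q _ hterase hst' (sInf N') haN'
        rw [Finset.insert_erase hat] at this
        exact rej_mono Set.diff_subset this
      · have hts' : t ⊆ s ∪ F := by
          intro x hx
          rcases Finset.mem_union.1 (hts hx) with h | h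
          · exact Finset.mem_union_left _ h
          · rcases Finset.mem_insert.1 h with h' | h'
            · exact absurd (h' ▸ hx) hat
            · exact Finset.mem_union_right _ h'
        exact rej_mono (Set.diff_subset.trans hN'M') (hrejt t hst hts')
  obtain ⟨a, Ms, hmono, hDk, hamem⟩ := fusion h0 hstep
  refine ⟨Set.range a, ?_, Set.infinite_range_of_injective hmono.injective, Or.inr ?_⟩
  · rintro x ⟨k, rfl⟩
    exact hM₀M ((hDk k).2.1 (hamem k k le_rfl))
  · rw [Set.eq_empty_iff_forall_notMem]
    rintro A ⟨hAc, hAU⟩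
    obtain ⟨t₀, ht₀, ht₀U⟩ := hU A hAU
    set t := t₀ ∪ s with ht
    have htA : IsInit t A := init_union ht₀ hAc.2.1
    have hsubt : cube t (A \ ↑t) ⊆ U :=
      (cube_of_init_subset ht₀ htA Finset.subset_union_left).trans ht₀U
    have hPex : ∃ j, ∀ c ∈ t, c < a j :=
      ⟨t.sup id + 1, fun c hc => lt_of_le_of_lt (Finset.le_sup (f := id) hc)
        (lt_of_lt_of_le (Nat.lt_succ_self _) (hmono.le_apply))⟩
    set k₀ := Nat.find hPex with hk₀def
    have hk₀ : ∀ c ∈ t, c < a k₀ := Nat.find_spec hPex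
    have hPmono : ∀ j, k₀ ≤ j → ∀ c ∈ t, c < a j :=
      fun j hj c hc => lt_of_lt_of_le (hk₀ c hc) (hmono.monotone hj)
    have hmem_lt : ∀ j, a j ∈ t → j < k₀ := by
      intro j hj
      by_contra h
      exact absurd (hPmono j (Nat.le_of_not_lt h) (a j) hj) (lt_irrefl _)
    have htsub : t ⊆ s ∪ Finset.image a (Finset.range k₀) := by
      intro c hc
      rcases Finset.mem_union.1 hc with hct₀ | hcs
      · rcases hAc.2.2 (ht₀.1 (Finset.mem_coe.2 hct₀)) with h | h
        · exact Finset.mem_union_left _ (Finset.mem_coe.1 h)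
        · obtain ⟨j, rfl⟩ := h
          exact Finset.mem_union_right _ (Finset.mem_image.2
            ⟨j, Finset.mem_range.2 (hmem_lt j hc), rfl⟩)
      · exact Finset.mem_union_left _ hcs
    have hrejtMs : rej U t (Ms k₀) := (hDk k₀).2.2 t Finset.subset_union_right htsub
    have hdiffsub : A \ ↑t ⊆ Ms k₀ := by
      rintro x ⟨hxA, hxt⟩
      have hxs : x ∉ (↑s : Set ℕ) := fun h =>
        hxt (Finset.mem_coe.2 (Finset.mem_union_right _ (Finset.mem_coe.1 h)))
      rcases hAc.2.2 hxA with h | h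
      · exact absurd h hxs
      · obtain ⟨j, rfl⟩ := h
        have : k₀ ≤ j := by
          by_contra hcon
          have := Nat.find_min hPex (Nat.lt_of_not_le hcon)
          push_neg at this
          obtain ⟨c, hct, hcge⟩ := this
          exact absurd (htA.2 (a j) hxA (fun hh => hxt (Finset.mem_coe.2 hh)) c hct)
            (not_lt.2 hcge)
        exact hamem k₀ j this
    exact hrejtMs (A \ ↑t) hdiffsub (hAc.1.diff t.finite_toSet) hsubt

end BS5

namespace BS5

lemma rnull_mono {P Q : Set (Set ℕ)} (h : P ⊆ Q) (hQ : RNull Q) : RNull P := by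
  intro s M hM
  obtain ⟨N, h1, h2, h3⟩ := hQ s M hM
  exact ⟨N, h1, h2, Set.eq_empty_of_subset_empty (h3 ▸ Set.inter_subset_inter_right _ h)⟩

lemma rnull_union {P Q : Set (Set ℕ)} (hP : RNull P) (hQ : RNull Q) : RNull (P ∪ Q) := by
  intro s M hM
  obtain ⟨N₁, h1, h2, h3⟩ := hP s M hM
  obtain ⟨N₂, g1, g2, g3⟩ := hQ s N₁ h2
  refine ⟨N₂, g1.trans h1, g2, ?_⟩
  rw [Set.inter_union_distrib_left, g3, Set.union_empty]
  exact Set.eq_empty_of_subset_empty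
    (h3 ▸ Set.inter_subset_inter_left _ (cube_mono g1))

lemma rnull_finfam : RNull {A : Set ℕ | ¬ A.Infinite} := by
  intro s M hM
  refine ⟨M, subset_rfl, hM, Set.eq_empty_iff_forall_notMem.2 ?_⟩
  rintro A ⟨hA, hA'⟩
  exact hA' hA.1

/-- countable unions of Ramsey null sets are Ramsey null (fusion). -/
lemma rnull_iUnion {C : ℕ → Set (Set ℕ)} (hC : ∀ n, RNull (C n)) : RNull (⋃ n, C n) := by
  classical
  intro s M hM
  set M₀ : Set ℕ := {x ∈ M | ∀ b ∈ s, b < x} with hM₀def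
  have hM₀inf : M₀.Infinite := above_infinite s hM
  have hM₀M : M₀ ⊆ M := fun x hx => hx.1
  obtain ⟨M₁, hM₁sub, hM₁inf, hM₁⟩ := hC 0 s M₀ hM₀inf
  set D : Finset ℕ → Set ℕ → Prop := fun F M' =>
    M'.Infinite ∧ M' ⊆ M₀ ∧ (∀ c ∈ F, ∀ b ∈ M', c < b) ∧
      ∀ t : Finset ℕ, ∀ n : ℕ, s ⊆ t → t ⊆ s ∪ F → n ≤ F.card → cube t M' ∩ C n = ∅ with hDdef
  have h0 : D ∅ M₁ := by
    refine ⟨hM₁inf, hM₁sub, by simp, ?_⟩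
    intro t n hst hts hn
    have ht : t = s := Finset.Subset.antisymm (by simpa using hts) hst
    have hn0 : n = 0 := by simpa using hn
    rw [ht, hn0]
    exact hM₁
  have hstep : ∀ F M', D F M' →
      ∃ a, a ∈ M' ∧ ∃ M'', M'' ⊆ M' ∧ (∀ b ∈ M'', a < b) ∧ D (insert a F) M'' := by
    rintro F M' ⟨hinf, hsubM₀, hord, hcube⟩
    have haM : sInf M' ∈ M' := Nat.sInf_mem hinf.nonempty
    have htail : (M' \ Set.Iic (sInf M')).Infinite := tail_infinite hinf _
    set Q : Finset ℕ × ℕ → Set ℕ → Prop := fun p N => cube p.1 N ∩ C p.2 = ∅ with hQ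
    have hmono : ∀ p N N', N' ⊆ N → Q p N → Q p N' := by
      intro p N N' hsub hq
      exact Set.eq_empty_of_subset_empty
        (hq ▸ Set.inter_subset_inter_left _ (cube_mono hsub))
    have htask : ∀ p ∈ (((s ∪ insert (sInf M') F).powerset ×ˢ
        Finset.range (F.card + 2)).toList), ∀ M'', M'' ⊆ (M' \ Set.Iic (sInf M')) →
        M''.Infinite → ∃ N, N ⊆ M'' ∧ N.Infinite ∧ Q p N := by
      rintro ⟨t, n⟩ _ M'' _ hM''inf
      obtain ⟨N, h1, h2, h3⟩ := hC n t M'' hM''inf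
      exact ⟨N, h1, h2, h3⟩
    obtain ⟨N', hN'sub, hN'inf, hN'Q⟩ := shrink_list hmono _ _ htail htask
    have hN'M' : N' ⊆ M' := hN'sub.trans Set.diff_subset
    have haF : sInf M' ∉ F := fun h => lt_irrefl _ (hord _ h _ haM)
    refine ⟨sInf M', haM, N', hN'M', ?_, hN'inf, hN'M'.trans hsubM₀, ?_, ?_⟩
    · intro b hb
      have := (hN'sub hb).2
      simpa using this
    · intro c hc b hb
      rcases Finset.mem_insert.1 hc with rfl | hc
      · have := (hN'sub hb).2
        simpa using this
      · exact hord c hc b (hN'M' hb)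
    · intro t n hst hts hn
      refine hN'Q (t, n) ?_
      rw [Finset.mem_toList, Finset.mem_product]
      refine ⟨Finset.mem_powerset.2 hts, Finset.mem_range.2 ?_⟩
      rw [Finset.card_insert_of_notMem haF] at hn
      omega
  obtain ⟨a, Ms, hmono, hDk, hamem⟩ := fusion h0 hstep
  have hMs₀ : ∀ k, Ms k ⊆ M₀ := fun k => (hDk k).2.1
  refine ⟨Set.range a, ?_, Set.infinite_range_of_injective hmono.injective, ?_⟩
  · rintro x ⟨k, rfl⟩
    exact hM₀M (hMs₀ k (hamem k k le_rfl))
  · rw [Set.eq_empty_iff_forall_notMem]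
    rintro A ⟨hAc, hAU⟩
    obtain ⟨Cn, ⟨n, rfl⟩, hACn⟩ := hAU
    set F := Finset.image a (Finset.range n) with hF
    set t := s ∪ F.filter (· ∈ A) with ht
    have hstt : s ⊆ t := Finset.subset_union_left
    have hcard : F.card = n := by
      rw [hF, Finset.card_image_of_injective _ hmono.injective, Finset.card_range]
    have hts : t ⊆ s ∪ F := Finset.union_subset_union_right (Finset.filter_subset _ _)
    have hdisj : cube t (Ms n) ∩ C n = ∅ :=
      (hDk n).2.2.2 t n hstt hts (le_of_eq hcard.symm)
    have hNM₀ : ∀ j, a j ∈ M₀ := fun j => hMs₀ j (hamem j j le_rfl)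
    have hAmem : A ∈ cube t (Ms n) := by
      refine ⟨hAc.1, ⟨?_, ?_⟩, ?_⟩
      · intro b hb
        rcases Finset.mem_union.1 (Finset.mem_coe.1 hb) with h | h
        · exact hAc.2.1.1 (Finset.mem_coe.2 h)
        · exact (Finset.mem_filter.1 h).2
      · intro b hbA hbt c hc
        have hbs : b ∉ s := fun h => hbt (Finset.mem_union_left _ h)
        obtain ⟨j, rfl⟩ := mem_cube_elim hAc hbA (fun h => hbs h)
        have hj : n ≤ j := by
          by_contra hcon
          exact hbt (Finset.mem_union_right _ (Finset.mem_filter.2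
            ⟨Finset.mem_image.2 ⟨j, Finset.mem_range.2 (Nat.lt_of_not_le hcon), rfl⟩, hbA⟩))
        rcases Finset.mem_union.1 hc with hcs | hcf
        · exact (hNM₀ j).2 c hcs
        · obtain ⟨hcF, hcA⟩ := Finset.mem_filter.1 hcf
          obtain ⟨i, hi, rfl⟩ := Finset.mem_image.1 hcF
          exact hmono (lt_of_lt_of_le (Finset.mem_range.1 hi) hj)
      · intro x hx
        by_cases hxs : x ∈ s
        · exact Or.inl (Finset.mem_coe.2 (Finset.mem_union_left _ hxs))
        · obtain ⟨j, rfl⟩ := mem_cube_elim hAc hx hxs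
          by_cases hj : j < n
          · exact Or.inl (Finset.mem_coe.2 (Finset.mem_union_right _ (Finset.mem_filter.2
              ⟨Finset.mem_image.2 ⟨j, Finset.mem_range.2 hj, rfl⟩, hx⟩)))
          · exact Or.inr (hamem n j (Nat.le_of_not_lt hj))
    rw [Set.eq_empty_iff_forall_notMem] at hdisj
    exact hdisj A ⟨hAmem, hACn⟩

/-- Baire property with respect to the Ellentuck structure -/
def BP (𝒜 : Set (Set ℕ)) : Prop :=
  ∃ U, EOpen U ∧ RNull ((𝒜 \ U) ∪ (U \ 𝒜))

lemma bp_of_eopen {U : Set (Set ℕ)} (hU : EOpen U) : BP U := by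
  refine ⟨U, hU, ?_⟩
  simp only [Set.diff_self, Set.union_empty]
  intro s M hM
  exact ⟨M, subset_rfl, hM, by simp⟩

lemma eopen_iUnion {U : ℕ → Set (Set ℕ)} (hU : ∀ n, EOpen (U n)) : EOpen (⋃ n, U n) := by
  rintro A ⟨Un, ⟨n, rfl⟩, hA⟩
  obtain ⟨t, h1, h2⟩ := hU n A hA
  exact ⟨t, h1, h2.trans (Set.subset_iUnion _ n)⟩

/-- the Ellentuck-exterior of `U` -/
def ext (U : Set (Set ℕ)) : Set (Set ℕ) :=
  {A | ∃ t, IsInit t A ∧ cube t (A \ ↑t) ∩ U = ∅}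

lemma eopen_ext (U : Set (Set ℕ)) : EOpen (ext U) := by
  rintro A ⟨t, h1, h2⟩
  refine ⟨t, h1, ?_⟩
  rintro B hB
  refine ⟨t, hB.2.1, ?_⟩
  apply Set.eq_empty_of_subset_empty
  rw [← h2]
  apply Set.inter_subset_inter_left
  apply cube_mono
  intro x hx
  rcases hB.2.2 hx.1 with h | h
  · exact absurd h hx.2
  · exact h

lemma rnull_boundary {U : Set (Set ℕ)} (hU : EOpen U) : RNull (Uᶜ \ ext U) := by
  intro s M hM
  obtain ⟨N, h1, h2, h3 | h3⟩ := galvin hU s M hM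
  · refine ⟨N, h1, h2, Set.eq_empty_iff_forall_notMem.2 ?_⟩
    rintro A ⟨hA1, hA2, -⟩
    exact hA2 (h3 hA1)
  · refine ⟨N, h1, h2, Set.eq_empty_iff_forall_notMem.2 ?_⟩
    rintro A ⟨hA1, -, hA3⟩
    refine hA3 ⟨s, hA1.2.1, ?_⟩
    apply Set.eq_empty_of_subset_empty
    rw [← h3]
    apply Set.inter_subset_inter_left
    apply cube_mono
    intro x hx
    rcases hA1.2.2 hx.1 with h | h
    · exact absurd h hx.2
    · exact h

lemma bp_compl {𝒜 : Set (Set ℕ)} (h : BP 𝒜) : BP 𝒜ᶜ := by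
  obtain ⟨U, hU, hN⟩ := h
  refine ⟨ext U, eopen_ext U, ?_⟩
  apply rnull_mono _ (rnull_union (rnull_union hN (rnull_boundary hU)) rnull_finfam)
  rintro A (⟨hA1, hA2⟩ | ⟨hA1, hA2⟩)
  · -- A ∉ 𝒜, A ∉ ext U
    by_cases hAU : A ∈ U
    · exact Or.inl (Or.inl (Or.inr ⟨hAU, hA1⟩))
    · exact Or.inl (Or.inr ⟨hAU, hA2⟩)
  · -- A ∈ ext U, A ∈ 𝒜
    by_cases hAU : A ∈ U
    · right
      intro hAinf
      obtain ⟨t, ht1, ht2⟩ := hA1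
      rw [Set.eq_empty_iff_forall_notMem] at ht2
      exact ht2 A ⟨⟨hAinf, ht1, fun x hx => by
        by_cases h : x ∈ ↑t
        · exact Or.inl h
        · exact Or.inr ⟨hx, h⟩⟩, hAU⟩
    · exact Or.inl (Or.inl (Or.inl ⟨by simpa using hA2, hAU⟩))

lemma bp_iUnion {𝒜 : ℕ → Set (Set ℕ)} (h : ∀ n, BP (𝒜 n)) : BP (⋃ n, 𝒜 n) := by
  choose U hU hN using h
  refine ⟨⋃ n, U n, eopen_iUnion hU, ?_⟩
  apply rnull_mono _ (rnull_iUnion (C := fun n => (𝒜 n \ U n) ∪ (U n \ 𝒜 n)) hN)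
  rintro A (⟨hA1, hA2⟩ | ⟨hA1, hA2⟩)
  · obtain ⟨B, ⟨n, rfl⟩, hB⟩ := hA1
    exact Set.mem_iUnion.2 ⟨n, Or.inl ⟨hB, fun h => hA2 (Set.mem_iUnion.2 ⟨n, h⟩)⟩⟩
  · obtain ⟨B, ⟨n, rfl⟩, hB⟩ := hA1
    exact Set.mem_iUnion.2 ⟨n, Or.inr ⟨hB, fun h => hA2 (Set.mem_iUnion.2 ⟨n, h⟩)⟩⟩

lemma bp_iInter {𝒜 : ℕ → Set (Set ℕ)} (h : ∀ n, BP (𝒜 n)) : BP (⋂ n, 𝒜 n) := by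
  have : (⋂ n, 𝒜 n) = (⋃ n, (𝒜 n)ᶜ)ᶜ := by
    rw [Set.compl_iUnion]
    simp
  rw [this]
  exact bp_compl (bp_iUnion (fun n => bp_compl (h n)))

/-- completely Ramsey property of Baire-property sets -/
lemma bp_ramsey {𝒜 : Set (Set ℕ)} (h : BP 𝒜) (s : Finset ℕ) (M : Set ℕ) (hM : M.Infinite) :
    ∃ N, N ⊆ M ∧ N.Infinite ∧ (cube s N ⊆ 𝒜 ∨ cube s N ∩ 𝒜 = ∅) := by
  obtain ⟨U, hU, hN⟩ := h
  obtain ⟨N₁, h1, h2, h3⟩ := hN s M hM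
  obtain ⟨N, g1, g2, g3 | g3⟩ := galvin hU s N₁ h2
  · refine ⟨N, g1.trans h1, g2, Or.inl ?_⟩
    intro A hA
    have hAU : A ∈ U := g3 hA
    have : A ∉ (𝒜 \ U) ∪ (U \ 𝒜) := by
      rw [Set.eq_empty_iff_forall_notMem] at h3
      exact fun hc => h3 A ⟨cube_mono g1 hA, hc⟩
    by_contra hc
    exact this (Or.inr ⟨hAU, hc⟩)
  · refine ⟨N, g1.trans h1, g2, Or.inr (Set.eq_empty_iff_forall_notMem.2 ?_)⟩
    rintro A ⟨hA1, hA2⟩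
    have hAU : A ∉ U := by
      rw [Set.eq_empty_iff_forall_notMem] at g3
      exact fun hc => g3 A ⟨hA1, hc⟩
    rw [Set.eq_empty_iff_forall_notMem] at h3
    exact h3 A ⟨cube_mono g1 hA1, Or.inl ⟨hA2, hAU⟩⟩

end BS5

namespace BS5

lemma bp_inter₂ {P Q : Set (Set ℕ)} (hP : BP P) (hQ : BP Q) : BP (P ∩ Q) := by
  have h : P ∩ Q = ⋂ n : ℕ, (if n = 0 then P else Q) := by
    ext A
    simp only [Set.mem_inter_iff, Set.mem_iInter]
    constructor
    · rintro ⟨h1, h2⟩ n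
      by_cases hn : n = 0 <;> simp [hn, h1, h2]
    · intro h
      have h0 := h 0
      have h1 := h 1
      simp at h0 h1
      exact ⟨h0, h1⟩
  rw [h]
  apply bp_iInter
  intro n
  by_cases hn : n = 0 <;> simp [hn, hP, hQ]

lemma eopen_infinite : EOpen {A : Set ℕ | A.Infinite} := by
  intro A _
  exact ⟨∅, isInit_empty A, fun B hB => hB.1⟩

section Means

variable {X : Type*} [NormedAddCommGroup X] [NormedSpace ℝ X] (x : ℕ → X)

/-- the `n`-th Cesàro mean of `x` along the increasing enumeration of `A` -/
noncomputable def mu (A : Set ℕ) (n : ℕ) : X :=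
  (n : ℝ)⁻¹ • ∑ k ∈ Finset.range n, x (enum A k)

lemma mu_eq_of_init {t : Finset ℕ} {A B : Set ℕ} (hA : A.Infinite) (hB : B.Infinite)
    (htA : IsInit t A) (htB : IsInit t B) {j : ℕ} (hj : j ≤ t.card) :
    mu x A j = mu x B j := by
  unfold mu
  congr 1
  apply Finset.sum_congr rfl
  intro k hk
  rw [enum_eq_of_isInit hA hB htA htB (lt_of_lt_of_le (Finset.mem_range.1 hk) hj)]

def Okn (k n : ℕ) : Set (Set ℕ) :=
  {A | A.Infinite ∧ ∃ m, n ≤ m ∧ ((k : ℝ) + 1)⁻¹ < ‖mu x A m - mu x A n‖}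

lemma eopen_Okn (k n : ℕ) : EOpen (Okn x k n) := by
  rintro A ⟨hAinf, m, hnm, hlt⟩
  refine ⟨firstSeg A m, isInit_firstSeg hAinf m, ?_⟩
  rintro B hB
  have hBinf : B.Infinite := hB.1
  have hcard : (firstSeg A m).card = m := card_firstSeg hAinf m
  have h1 : mu x A m = mu x B m :=
    mu_eq_of_init x hAinf hBinf (isInit_firstSeg hAinf m) hB.2.1 (le_of_eq hcard.symm)
  have h2 : mu x A n = mu x B n :=
    mu_eq_of_init x hAinf hBinf (isInit_firstSeg hAinf m) hB.2.1 (hcard.symm ▸ hnm)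
  exact ⟨hBinf, m, hnm, h1 ▸ h2 ▸ hlt⟩

/-- the family of infinite sets along which the Cesàro means of `x` are Cauchy -/
def Ffam : Set (Set ℕ) :=
  {A | A.Infinite ∧ ∀ k : ℕ, ∃ n, ∀ m, n ≤ m → ‖mu x A m - mu x A n‖ ≤ ((k : ℝ) + 1)⁻¹}

lemma bp_Ffam : BP (Ffam x) := by
  have h : Ffam x = {A : Set ℕ | A.Infinite} ∩ (⋃ k, ⋂ n, Okn x k n)ᶜ := by
    ext A
    simp only [Ffam, Okn, Set.mem_inter_iff, Set.mem_setOf_eq, Set.mem_compl_iff,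
      Set.mem_iUnion, Set.mem_iInter, not_exists, not_forall]
    constructor
    · rintro ⟨hinf, h⟩
      refine ⟨hinf, fun k => ?_⟩
      obtain ⟨n, hn⟩ := h k
      exact ⟨n, fun hc => absurd (hc.2.choose_spec.2) (not_lt.2 (hn _ hc.2.choose_spec.1))⟩
    · rintro ⟨hinf, h⟩
      refine ⟨hinf, fun k => ?_⟩
      obtain ⟨n, hn⟩ := h k
      refine ⟨n, fun m hm => ?_⟩
      by_contra hc
      exact hn ⟨hinf, m, hm, lt_of_not_ge hc⟩
  rw [h]
  exact bp_inter₂ (bp_of_eopen eopen_infinite)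
    (bp_compl (bp_iUnion fun k => bp_iInter fun n => bp_of_eopen (eopen_Okn x k n)))

lemma means_dichotomy :
    ∃ N : Set ℕ, N.Infinite ∧ (cube ∅ N ⊆ Ffam x ∨ cube ∅ N ∩ Ffam x = ∅) := by
  obtain ⟨N, -, h2, h3⟩ := bp_ramsey (bp_Ffam x) ∅ Set.univ Set.infinite_univ
  exact ⟨N, h2, h3⟩

lemma mem_cube_empty {A N : Set ℕ} (hA : A.Infinite) (hAN : A ⊆ N) : A ∈ cube ∅ N :=
  ⟨hA, isInit_empty A, by simpa using hAN⟩

lemma mu_range (f : ℕ → ℕ) (hf : StrictMono f) (n : ℕ) :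
    mu x (Set.range f) n = (n : ℝ)⁻¹ • ∑ k ∈ Finset.range n, x (f k) := by
  unfold mu
  rw [enum_range_strictMono hf]

end Means

end BS5

namespace BS5

section Analysis

variable {X : Type*} [NormedAddCommGroup X] [NormedSpace ℝ X]

lemma mean_sub (y : ℕ → X) (l : X) {n : ℕ} (hn : n ≠ 0) :
    (n : ℝ)⁻¹ • ∑ k ∈ Finset.range n, y k - l =
      (n : ℝ)⁻¹ • ∑ k ∈ Finset.range n, (y k - l) := by
  rw [Finset.sum_sub_distrib, smul_sub, Finset.sum_const, Finset.card_range,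
    ← Nat.cast_smul_eq_nsmul ℝ, smul_smul,
    inv_mul_cancel₀ (Nat.cast_ne_zero.2 hn), one_smul]

lemma sum_centered_bound {y : ℕ → X} {l : X} {C : ℝ} (hC : ∀ n, ‖y n - l‖ ≤ C)
    {ε : ℝ} {N : ℕ}
    (h : ∀ f : X →L[ℝ] ℝ, ‖f‖ ≤ 1 → {n : ℕ | ε < |f (y n - l)|}.encard ≤ (N : ℕ∞))
    (hε : 0 ≤ ε) (n : ℕ) :
    ‖∑ k ∈ Finset.range n, (y k - l)‖ ≤ N * C + n * ε := by
  classical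
  have hC0 : 0 ≤ C := le_trans (norm_nonneg _) (hC 0)
  apply NormedSpace.norm_le_dual_bound ℝ _ (by positivity)
  intro f
  by_cases hf : f = (0 : StrongDual ℝ X)
  · simp [hf]
  · have hfnorm : (0:ℝ) < ‖f‖ := norm_pos_iff.2 hf
    set g : X →L[ℝ] ℝ := ‖f‖⁻¹ • f with hg
    have hgnorm : ‖g‖ ≤ 1 := by
      have hh : ‖(‖f‖⁻¹ : ℝ) • f‖ = ‖(‖f‖⁻¹ : ℝ)‖ * ‖f‖ := norm_smul _ f
      rw [hg, hh, Real.norm_eq_abs, abs_inv, abs_norm, inv_mul_cancel₀ (ne_of_gt hfnorm)]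
    have hS := h g hgnorm
    set badF := (Finset.range n).filter (fun k => ε < |g (y k - l)|) with hbadF
    have hbadcard : (badF.card : ℝ) ≤ N := by
      have hsub : (↑badF : Set ℕ) ⊆ {m : ℕ | ε < |g (y m - l)|} := by
        intro m hm
        exact (Finset.mem_filter.1 hm).2
      have := (Set.encard_mono hsub).trans hS
      rw [Set.encard_coe_eq_coe_finsetCard] at this
      exact_mod_cast this
    have habs : ∀ k, |g (y k - l)| ≤ C := by
      intro k
      calc |g (y k - l)| = ‖g (y k - l)‖ := (Real.norm_eq_abs _).symm
        _ ≤ ‖g‖ * ‖y k - l‖ := g.le_opNorm _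
        _ ≤ 1 * C := mul_le_mul hgnorm (hC k) (norm_nonneg _) zero_le_one
        _ = C := one_mul C
    have hgv : |g (∑ k ∈ Finset.range n, (y k - l))| ≤ N * C + n * ε := by
      calc |g (∑ k ∈ Finset.range n, (y k - l))|
          = |∑ k ∈ Finset.range n, g (y k - l)| := by rw [map_sum]
        _ ≤ ∑ k ∈ Finset.range n, |g (y k - l)| := Finset.abs_sum_le_sum_abs _ _
        _ = ∑ k ∈ badF, |g (y k - l)| +
            ∑ k ∈ (Finset.range n).filter (fun k => ¬ ε < |g (y k - l)|), |g (y k - l)| :=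
            (Finset.sum_filter_add_sum_filter_not _ _ _).symm
        _ ≤ ∑ _k ∈ badF, C +
            ∑ _k ∈ (Finset.range n).filter (fun k => ¬ ε < |g (y k - l)|), ε := by
            apply add_le_add <;> apply Finset.sum_le_sum
            · intro k _; exact habs k
            · intro k hk; exact not_lt.1 (Finset.mem_filter.1 hk).2
        _ = badF.card * C +
            ((Finset.range n).filter (fun k => ¬ ε < |g (y k - l)|)).card * ε := by
            rw [Finset.sum_const, Finset.sum_const, nsmul_eq_mul, nsmul_eq_mul]
        _ ≤ N * C + n * ε := by
            apply add_le_add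
            · exact mul_le_mul_of_nonneg_right hbadcard hC0
            · apply mul_le_mul_of_nonneg_right _ hε
              exact_mod_cast Finset.card_le_card (Finset.filter_subset _ _) |>.trans
                (le_of_eq (Finset.card_range n))
    have hfg : f (∑ k ∈ Finset.range n, (y k - l)) =
        ‖f‖ * g (∑ k ∈ Finset.range n, (y k - l)) := by
      rw [hg, ContinuousLinearMap.smul_apply, smul_eq_mul, ← mul_assoc,
        mul_inv_cancel₀ (ne_of_gt hfnorm), one_mul]
    rw [Real.norm_eq_abs, hfg, abs_mul, abs_norm, mul_comm]
    exact mul_le_mul_of_nonneg_right hgv (norm_nonneg f)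

lemma cesaro_of_unifWeakly {y : ℕ → X} {l : X} {C : ℝ} (hC : ∀ n, ‖y n - l‖ ≤ C)
    (h : UnifWeaklyConvergent y l) : CesaroConvergent y l := by
  have hC0 : 0 ≤ C := le_trans (norm_nonneg _) (hC 0)
  unfold CesaroConvergent
  rw [Metric.tendsto_atTop]
  intro ε hε
  obtain ⟨N, hN⟩ := h (ε/4) (by positivity)
  obtain ⟨n₀, hn₀⟩ : ∃ n₀ : ℕ, (N * C)/(ε/2) < n₀ := exists_nat_gt _
  refine ⟨max n₀ 1, fun n hn => ?_⟩
  have hn1 : 1 ≤ n := le_trans (le_max_right _ _) hn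
  have hnn0 : (0:ℝ) < n := by exact_mod_cast hn1
  rw [dist_eq_norm, mean_sub y l (by omega)]
  have hv := sum_centered_bound hC hN (by positivity) n
  rw [norm_smul, Real.norm_eq_abs, abs_inv, Nat.abs_cast]
  have hNCn : (N:ℝ) * C < n * (ε/2) := by
    have h1 : ((N:ℝ) * C)/(ε/2) < (n:ℝ) := by
      calc ((N:ℝ) * C)/(ε/2) < n₀ := hn₀
        _ ≤ (n:ℝ) := by exact_mod_cast le_trans (le_max_left _ _) hn
    rwa [div_lt_iff₀ (by positivity)] at h1
  calc (n:ℝ)⁻¹ * ‖∑ k ∈ Finset.range n, (y k - l)‖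
      ≤ (n:ℝ)⁻¹ * ((N:ℝ) * C + n * (ε/4)) := by
        apply mul_le_mul_of_nonneg_left hv (by positivity)
    _ < (n:ℝ)⁻¹ * (n * (ε/2) + n * (ε/4)) := by
        apply mul_lt_mul_of_pos_left _ (by positivity)
        linarith
    _ = 3*ε/4 := by field_simp; ring
    _ < ε := by linarith

end Analysis

end BS5

namespace BS5

section Analysis2

variable {X : Type*} [NormedAddCommGroup X] [NormedSpace ℝ X]

lemma sum_centered_norm_le {y : ℕ → X} {l : X} {C : ℝ} (hC : ∀ n, ‖y n - l‖ ≤ C)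
    (S : Finset ℕ) : ‖∑ i ∈ S, (y i - l)‖ ≤ S.card * C := by
  calc ‖∑ i ∈ S, (y i - l)‖ ≤ ∑ i ∈ S, ‖y i - l‖ := norm_sum_le _ _
    _ ≤ ∑ _i ∈ S, C := Finset.sum_le_sum (fun i _ => hC i)
    _ = S.card * C := by rw [Finset.sum_const, nsmul_eq_mul]

lemma bad_supply {y : ℕ → X} {l : X} {ε : ℝ}
    (hcon : ∀ N : ℕ, ∃ f : X →L[ℝ] ℝ, ‖f‖ ≤ 1 ∧
      (N : ℕ∞) < {n : ℕ | ε < |f (y n - l)|}.encard)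
    (K L : ℕ) : ∃ (f : X →L[ℝ] ℝ) (T : Finset ℕ), ‖f‖ ≤ 1 ∧ L ≤ T.card ∧
      (∀ i ∈ T, K < i) ∧ ∀ i ∈ T, ε < f (y i - l) := by
  classical
  obtain ⟨f, hf1, hf2⟩ := hcon (2*L + K + 1)
  have h1 : ((2*L + K + 2 : ℕ) : ℕ∞) ≤ {n : ℕ | ε < |f (y n - l)|}.encard := by
    have := Order.add_one_le_of_lt hf2
    refine le_trans (le_of_eq ?_) this
    push_cast
    ring
  obtain ⟨S', hS'sub, hS'card⟩ := Set.exists_subset_encard_eq h1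
  have hfin : S'.Finite := Set.finite_of_encard_eq_coe hS'card
  set T₀ := hfin.toFinset with hT₀
  have hT₀card : T₀.card = 2*L + K + 2 := by
    have := hfin.encard_eq_coe_toFinset_card
    rw [this] at hS'card
    exact_mod_cast hS'card
  have hT₀mem : ∀ i ∈ T₀, ε < |f (y i - l)| := by
    intro i hi
    exact hS'sub (hfin.mem_toFinset.1 hi)
  set T₁ := T₀.filter (fun i => K < i) with hT₁
  have hT₁card : 2*L + 1 ≤ T₁.card := by
    have hsplit : T₁.card + (T₀.filter (fun i => ¬ K < i)).card = T₀.card := by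
      rw [hT₁]
      simpa using Finset.card_filter_add_card_filter_not (s := T₀) (p := fun i => K < i)
    have hneg : (T₀.filter (fun i => ¬ K < i)).card ≤ K + 1 := by
      apply le_trans (Finset.card_le_card (t := Finset.range (K+1)) ?_) ?_
      · intro i hi
        simp only [Finset.mem_filter, not_lt] at hi
        exact Finset.mem_range.2 (by omega)
      · simp
    omega
  set Tp := T₁.filter (fun i => ε < f (y i - l)) with hTpdef
  set Tm := T₁.filter (fun i => ε < (-f) (y i - l)) with hTmdef
  have hcover : T₁ ⊆ Tp ∪ Tm := by
    intro i hi
    have hiT₀ : i ∈ T₀ := Finset.mem_of_mem_filter _ hi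
    have := hT₀mem i hiT₀
    rcases lt_abs.1 this with h | h
    · exact Finset.mem_union_left _ (Finset.mem_filter.2 ⟨hi, h⟩)
    · refine Finset.mem_union_right _ (Finset.mem_filter.2 ⟨hi, ?_⟩)
      rw [ContinuousLinearMap.neg_apply]
      exact h
  have hcards : T₁.card ≤ Tp.card + Tm.card :=
    (Finset.card_le_card hcover).trans (Finset.card_union_le _ _)
  by_cases hL : L ≤ Tp.card
  · refine ⟨f, Tp, hf1, hL, ?_, ?_⟩
    · intro i hi
      exact (Finset.mem_filter.1 (Finset.mem_of_mem_filter _ hi)).2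
    · intro i hi
      exact (Finset.mem_filter.1 hi).2
  · refine ⟨-f, Tm, by rw [norm_neg]; exact hf1, by omega, ?_, ?_⟩
    · intro i hi
      exact (Finset.mem_filter.1 (Finset.mem_of_mem_filter _ hi)).2
    · intro i hi
      exact (Finset.mem_filter.1 hi).2

lemma plain_supply {y : ℕ → X} {l : X} {C ε : ℝ} (hε : 0 < ε) (hC : ∀ n, ‖y n - l‖ ≤ C)
    (hmean : Filter.Tendsto (fun n : ℕ => (n : ℝ)⁻¹ • ∑ k ∈ Finset.range n, y k)
      Filter.atTop (nhds l))
    (K m : ℕ) : ∃ T : Finset ℕ, T.Nonempty ∧ (∀ i ∈ T, K < i) ∧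
      ‖∑ i ∈ T, (y i - l)‖ + m * C ≤ ε/8 * (m + T.card) := by
  have hC0 : 0 ≤ C := le_trans (norm_nonneg _) (hC 0)
  set p := K + 1 with hp
  rw [Metric.tendsto_atTop] at hmean
  obtain ⟨q₀, hq₀⟩ := hmean (ε/32) (by positivity)
  obtain ⟨N₁, hN₁⟩ := exists_nat_ge (32*((p:ℝ) + m)*C/ε)
  set q := max q₀ (max (2*p) N₁) with hq
  have hq2p : 2*p ≤ q := le_trans (le_max_left _ _) (le_max_right _ _)
  have hpq : p ≤ q := by omega
  have hplt : p < q := by omega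
  have hqpos : 0 < q := by omega
  have hqmean : ‖(q : ℝ)⁻¹ • ∑ k ∈ Finset.range q, y k - l‖ ≤ ε/32 := by
    have := hq₀ q (le_trans (le_max_left _ _) le_rfl)
    rw [dist_eq_norm] at this
    exact this.le
  have hqN : 32*((p:ℝ) + m)*C/ε ≤ (q : ℝ) := by
    refine hN₁.trans ?_
    exact_mod_cast le_trans (le_max_right (2*p) N₁) (le_max_right q₀ _)
  have hqC : ((p:ℝ) + m)*C ≤ (q:ℝ) * (ε/32) := by
    rw [div_le_iff₀ hε] at hqN
    nlinarith
  refine ⟨Finset.Ico p q, by rw [Finset.nonempty_Ico]; omega, ?_, ?_⟩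
  · intro i hi
    have := (Finset.mem_Ico.1 hi).1
    omega
  · have hsum : ∑ i ∈ Finset.Ico p q, (y i - l) =
        (∑ i ∈ Finset.range q, (y i - l)) - ∑ i ∈ Finset.range p, (y i - l) := by
      rw [Finset.sum_Ico_eq_sub _ hpq]
    have hvq : ‖∑ i ∈ Finset.range q, (y i - l)‖ ≤ (q:ℝ) * (ε/32) := by
      have heq : ∑ i ∈ Finset.range q, (y i - l) =
          (q : ℝ) • ((q : ℝ)⁻¹ • ∑ k ∈ Finset.range q, y k - l) := by
        rw [mean_sub _ _ (by omega : q ≠ 0), smul_smul,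
          mul_inv_cancel₀ (Nat.cast_ne_zero.2 (by omega : q ≠ 0)), one_smul]
      rw [heq, norm_smul, Real.norm_eq_abs, Nat.abs_cast]
      exact mul_le_mul_of_nonneg_left hqmean (Nat.cast_nonneg q)
    have hvp : ‖∑ i ∈ Finset.range p, (y i - l)‖ ≤ (p:ℝ) * C := by
      have := sum_centered_norm_le hC (Finset.range p)
      rwa [Finset.card_range] at this
    have hT : ‖∑ i ∈ Finset.Ico p q, (y i - l)‖ ≤ (q:ℝ)*(ε/32) + (p:ℝ)*C := by
      rw [hsum]
      exact (norm_sub_le _ _).trans (add_le_add hvq hvp)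
    have hcard : ((Finset.Ico p q).card : ℝ) = (q:ℝ) - p := by
      rw [Nat.card_Ico, Nat.cast_sub hpq]
    rw [hcard]
    have hm0 : (0:ℝ) ≤ m := Nat.cast_nonneg m
    have h2p : 2*(p:ℝ) ≤ q := by exact_mod_cast hq2p
    calc ‖∑ i ∈ Finset.Ico p q, (y i - l)‖ + m * C
        ≤ ((q:ℝ)*(ε/32) + (p:ℝ)*C) + m*C := by linarith
      _ = (q:ℝ)*(ε/32) + ((p:ℝ)+m)*C := by ring
      _ ≤ (q:ℝ)*(ε/32) + (q:ℝ)*(ε/32) := by linarith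
      _ = ε/8 * ((q:ℝ)/2) := by ring
      _ ≤ ε/8 * (m + ((q:ℝ) - p)) := by
          apply mul_le_mul_of_nonneg_left _ (by positivity)
          linarith

end Analysis2

end BS5

namespace BS5

section Analysis3

variable {X : Type*} [NormedAddCommGroup X] [NormedSpace ℝ X]

lemma step_exists {y : ℕ → X} {l : X} {C ε : ℝ} (hε : 0 < ε) (hC : ∀ n, ‖y n - l‖ ≤ C)
    (hmean : Filter.Tendsto (fun n : ℕ => (n : ℝ)⁻¹ • ∑ k ∈ Finset.range n, y k)
      Filter.atTop (nhds l))
    (hcon : ∀ N : ℕ, ∃ f : X →L[ℝ] ℝ, ‖f‖ ≤ 1 ∧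
      (N : ℕ∞) < {n : ℕ | ε < |f (y n - l)|}.encard)
    (S : Finset ℕ) :
    ∃ p : Finset ℕ × Finset ℕ,
      S ⊆ p.1 ∧ p.1 ⊆ p.2 ∧ S.card < p.1.card ∧ p.1.card < p.2.card ∧
      (∀ i ∈ p.1, i ∉ S → ∀ c ∈ S, c < i) ∧ (∀ i ∈ p.2, i ∉ p.1 → ∀ c ∈ p.1, c < i) ∧
      ‖∑ i ∈ p.1, (y i - l)‖ ≤ ε/8 * p.1.card ∧
      ε/2 * p.2.card ≤ ‖∑ i ∈ p.2, (y i - l)‖ := by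
  classical
  have hC0 : 0 ≤ C := le_trans (norm_nonneg _) (hC 0)
  obtain ⟨T₁, hT₁ne, hT₁gt, hT₁bd⟩ := plain_supply hε hC hmean (S.sup id) S.card
  set S₁ := S ∪ T₁ with hS₁
  have hdis₁ : Disjoint S T₁ := by
    rw [Finset.disjoint_left]
    intro a haS haT
    exact absurd (hT₁gt a haT) (not_lt.2 (Finset.le_sup (f := id) haS))
  have hcard₁ : S₁.card = S.card + T₁.card := Finset.card_union_of_disjoint hdis₁
  have habove₁ : ∀ i ∈ S₁, i ∉ S → ∀ c ∈ S, c < i := by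
    intro i hi hiS c hc
    rcases Finset.mem_union.1 hi with h | h
    · exact absurd h hiS
    · exact lt_of_le_of_lt (Finset.le_sup (f := id) hc) (hT₁gt i h)
  have hsum₁ : ∑ i ∈ S₁, (y i - l) = (∑ i ∈ S, (y i - l)) + ∑ i ∈ T₁, (y i - l) :=
    Finset.sum_union hdis₁
  have hb₁ : ‖∑ i ∈ S₁, (y i - l)‖ ≤ ε/8 * S₁.card := by
    rw [hsum₁]
    have h1 := sum_centered_norm_le hC S
    have h2 : ((S₁.card : ℕ) : ℝ) = (S.card : ℝ) + T₁.card := by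
      rw [hcard₁]; push_cast; ring
    rw [h2]
    calc ‖(∑ i ∈ S, (y i - l)) + ∑ i ∈ T₁, (y i - l)‖
        ≤ ‖∑ i ∈ S, (y i - l)‖ + ‖∑ i ∈ T₁, (y i - l)‖ := norm_add_le _ _
      _ ≤ S.card * C + ‖∑ i ∈ T₁, (y i - l)‖ := by linarith
      _ ≤ ε/8 * ((S.card : ℝ) + T₁.card) := by linarith [hT₁bd]
  -- now the bad block
  set K₀ := ⌈(2*C + ε)/ε⌉₊ with hK₀
  obtain ⟨f, T₂, hf1, hT₂card, hT₂gt, hT₂f⟩ := bad_supply hcon (S₁.sup id) (S₁.card * K₀ + 1)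
  set S₂ := S₁ ∪ T₂ with hS₂
  have hdis₂ : Disjoint S₁ T₂ := by
    rw [Finset.disjoint_left]
    intro a haS haT
    exact absurd (hT₂gt a haT) (not_lt.2 (Finset.le_sup (f := id) haS))
  have hcard₂ : S₂.card = S₁.card + T₂.card := Finset.card_union_of_disjoint hdis₂
  have habove₂ : ∀ i ∈ S₂, i ∉ S₁ → ∀ c ∈ S₁, c < i := by
    intro i hi hiS c hc
    rcases Finset.mem_union.1 hi with h | h
    · exact absurd h hiS
    · exact lt_of_le_of_lt (Finset.le_sup (f := id) hc) (hT₂gt i h)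
  have hsum₂ : ∑ i ∈ S₂, (y i - l) = (∑ i ∈ S₁, (y i - l)) + ∑ i ∈ T₂, (y i - l) :=
    Finset.sum_union hdis₂
  have hb₂ : ε/2 * S₂.card ≤ ‖∑ i ∈ S₂, (y i - l)‖ := by
    have hflow : -(S₁.card * C) ≤ f (∑ i ∈ S₁, (y i - l)) := by
      have h1 : |f (∑ i ∈ S₁, (y i - l))| ≤ S₁.card * C := by
        calc |f (∑ i ∈ S₁, (y i - l))| = ‖f (∑ i ∈ S₁, (y i - l))‖ := (Real.norm_eq_abs _).symm
          _ ≤ ‖f‖ * ‖∑ i ∈ S₁, (y i - l)‖ := f.le_opNorm _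
          _ ≤ 1 * (S₁.card * C) :=
              mul_le_mul hf1 (sum_centered_norm_le hC S₁) (norm_nonneg _) zero_le_one
          _ = S₁.card * C := one_mul _
      linarith [(abs_le.1 h1).1]
    have hTlow : (T₂.card : ℝ) * ε ≤ f (∑ i ∈ T₂, (y i - l)) := by
      rw [map_sum]
      have := Finset.card_nsmul_le_sum T₂ (fun i => f (y i - l)) ε
        (fun i hi => (hT₂f i hi).le)
      rwa [nsmul_eq_mul] at this
    have hL : (S₁.card : ℝ) * ((2*C + ε)/ε) ≤ T₂.card := by
      have h1 : ((2*C + ε)/ε) ≤ (K₀ : ℝ) := Nat.le_ceil _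
      have h2 : (S₁.card : ℝ) * ((2*C+ε)/ε) ≤ (S₁.card : ℝ) * K₀ :=
        mul_le_mul_of_nonneg_left h1 (Nat.cast_nonneg _)
      have h3 : ((S₁.card * K₀ + 1 : ℕ) : ℝ) ≤ T₂.card := by exact_mod_cast hT₂card
      push_cast at h3
      linarith
    have hkey : ε/2 * ((S₁.card : ℝ) + T₂.card) ≤ T₂.card * ε - S₁.card * C := by
      have hεne : ε ≠ 0 := ne_of_gt hε
      have h4 : ((2*C+ε)/ε) * (ε/2) = C + ε/2 := by
        field_simp
      have h5 : (S₁.card : ℝ) * ((2*C+ε)/ε) * (ε/2) ≤ (T₂.card : ℝ) * (ε/2) :=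
        mul_le_mul_of_nonneg_right hL (by positivity)
      rw [mul_assoc, h4] at h5
      nlinarith
    have hfS₂ : f (∑ i ∈ S₂, (y i - l)) ≤ ‖∑ i ∈ S₂, (y i - l)‖ := by
      calc f (∑ i ∈ S₂, (y i - l)) ≤ |f (∑ i ∈ S₂, (y i - l))| := le_abs_self _
        _ = ‖f (∑ i ∈ S₂, (y i - l))‖ := (Real.norm_eq_abs _).symm
        _ ≤ ‖f‖ * ‖∑ i ∈ S₂, (y i - l)‖ := f.le_opNorm _
        _ ≤ 1 * ‖∑ i ∈ S₂, (y i - l)‖ :=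
            mul_le_mul_of_nonneg_right hf1 (norm_nonneg _)
        _ = ‖∑ i ∈ S₂, (y i - l)‖ := one_mul _
    have hc2 : ((S₂.card : ℕ) : ℝ) = (S₁.card : ℝ) + T₂.card := by
      rw [hcard₂]; push_cast; ring
    rw [hc2]
    have : f (∑ i ∈ S₂, (y i - l)) =
        f (∑ i ∈ S₁, (y i - l)) + f (∑ i ∈ T₂, (y i - l)) := by
      rw [hsum₂, map_add]
    linarith
  have hT₂ne : T₂.Nonempty := Finset.card_pos.1 (by omega)
  refine ⟨(S₁, S₂), Finset.subset_union_left, Finset.subset_union_left, ?_, ?_,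
    habove₁, habove₂, hb₁, hb₂⟩
  · have h : 0 < T₁.card := Finset.card_pos.2 hT₁ne
    show S.card < S₁.card
    omega
  · have h : 0 < T₂.card := Finset.card_pos.2 hT₂ne
    show S₁.card < S₂.card
    omega

end Analysis3

end BS5

namespace BS5

section Analysis4

variable {X : Type*} [NormedAddCommGroup X] [NormedSpace ℝ X]

lemma unifWeakly_of_all_subseq {y : ℕ → X} {l : X} {C : ℝ} (hC : ∀ n, ‖y n - l‖ ≤ C)
    (hmean : Filter.Tendsto (fun n : ℕ => (n : ℝ)⁻¹ • ∑ k ∈ Finset.range n, y k)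
      Filter.atTop (nhds l))
    (hstar : ∀ ψ : ℕ → ℕ, StrictMono ψ →
      ∃ l', Filter.Tendsto (fun n : ℕ => (n : ℝ)⁻¹ • ∑ k ∈ Finset.range n, y (ψ k))
        Filter.atTop (nhds l')) :
    UnifWeaklyConvergent y l := by
  classical
  by_contra hcon
  unfold UnifWeaklyConvergent at hcon
  push_neg at hcon
  obtain ⟨ε, hε, hcon⟩ := hcon
  -- build the blocks
  choose Fp hsub1 hsub2 hcardlt1 hcardlt2 habove1 habove2 hbound1 hbound2 using
    fun S => step_exists hε hC hmean hcon S
  set SS : ℕ → Finset ℕ := fun j => Nat.rec ∅ (fun _ S => (Fp S).2) j with hSSdef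
  have hSSsucc : ∀ j, SS (j + 1) = (Fp (SS j)).2 := fun j => rfl
  set S1 : ℕ → Finset ℕ := fun j => (Fp (SS j)).1 with hS1def
  have hs1 : ∀ j, SS j ⊆ S1 j := fun j => hsub1 (SS j)
  have hs2 : ∀ j, S1 j ⊆ SS (j + 1) := fun j => hsub2 (SS j)
  have hc1 : ∀ j, (SS j).card < (S1 j).card := fun j => hcardlt1 (SS j)
  have hc2 : ∀ j, (S1 j).card < (SS (j + 1)).card := fun j => hcardlt2 (SS j)
  have hstep_above : ∀ j, ∀ i ∈ SS (j + 1), i ∉ SS j → ∀ c ∈ SS j, c < i := by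
    intro j i hi hiS c hc
    by_cases hiS1 : i ∈ S1 j
    · exact habove1 (SS j) i hiS1 hiS c hc
    · exact habove2 (SS j) i hi hiS1 c (hs1 j hc)
  have hmono : ∀ j j', j ≤ j' → SS j ⊆ SS j' := by
    intro j j' hjj'
    induction j' with
    | zero => rw [Nat.le_zero.1 hjj']
    | succ n ih =>
      rcases Nat.lt_or_ge j (n + 1) with h | h
      · exact (ih (Nat.lt_succ_iff.1 h)).trans ((hs1 n).trans (hs2 n))
      · rw [Nat.le_antisymm hjj' h]
  have habove : ∀ j j', j ≤ j' → ∀ i ∈ SS j', i ∉ SS j → ∀ c ∈ SS j, c < i := by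
    intro j j' hjj'
    induction j' with
    | zero =>
      intro i hi hiS
      rw [Nat.le_zero.1 hjj'] at hiS
      exact absurd (hmono 0 0 le_rfl hi) hiS
    | succ n ih =>
      intro i hi hiS c hc
      rcases Nat.lt_or_ge j (n + 1) with h | h
      · by_cases hin : i ∈ SS n
        · exact ih (Nat.lt_succ_iff.1 h) i hin hiS c hc
        · exact hstep_above n i hi hin c (hmono j n (Nat.lt_succ_iff.1 h) hc)
      · rw [Nat.le_antisymm hjj' h] at hiS
        exact absurd hi hiS
  have hcard_ge : ∀ j, j ≤ (SS j).card := by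
    intro j
    induction j with
    | zero => omega
    | succ n ih =>
      have := hc1 n
      have := hc2 n
      omega
  set W : Set ℕ := ⋃ j, (↑(SS j) : Set ℕ) with hW
  have hSSW : ∀ j, (↑(SS j) : Set ℕ) ⊆ W := fun j => Set.subset_iUnion (fun j => (↑(SS j) : Set ℕ)) j
  have hWinf : W.Infinite := by
    intro hfin
    have hsub : ∀ j, SS j ⊆ hfin.toFinset := by
      intro j i hi
      rw [Set.Finite.mem_toFinset]
      exact hSSW j hi
    have h1 := Finset.card_le_card (hsub (hfin.toFinset.card + 1))
    have h2 := hcard_ge (hfin.toFinset.card + 1)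
    omega
  have hinitSS : ∀ j, IsInit (SS j) W := by
    intro j
    refine ⟨hSSW j, ?_⟩
    intro a haW haS c hc
    obtain ⟨B, ⟨j'', rfl⟩, hi⟩ := haW
    rcases le_or_gt j'' j with h | h
    · exact absurd (hmono j'' j h hi) haS
    · exact habove j j'' h.le a hi haS c hc
  have hinitS1 : ∀ j, IsInit (S1 j) W := by
    intro j
    refine ⟨(Finset.coe_subset.2 (hs2 j)).trans (hSSW (j + 1)), ?_⟩
    intro a haW haS c hc
    obtain ⟨B, ⟨j'', rfl⟩, hi⟩ := haW
    rcases le_or_gt j'' j with h | h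
    · exact absurd (hs1 j (hmono j'' j h hi)) haS
    · by_cases hin : a ∈ SS (j + 1)
      · exact habove2 (SS j) a hin haS c hc
      · exact habove (j + 1) j'' h a hi hin c (hs2 j hc)
  -- the subsequence
  obtain ⟨l', hl'⟩ := hstar (enum W) (enum_strictMono hWinf)
  have hmean_at : ∀ S : Finset ℕ, IsInit S W → S.card ≠ 0 →
      (↑S.card : ℝ)⁻¹ • ∑ k ∈ Finset.range S.card, y (enum W k) - l
        = (↑S.card : ℝ)⁻¹ • ∑ i ∈ S, (y i - l) := by
    intro S hS hcard0
    rw [mean_sub _ _ hcard0]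
    congr 1
    have himg : Finset.image (enum W) (Finset.range S.card) = S :=
      init_eq_init (isInit_firstSeg hWinf S.card) hS (card_firstSeg hWinf S.card)
    rw [← Finset.sum_image (f := fun i => y i - l) (g := enum W) (s := Finset.range S.card)
      (fun a _ b _ h => (enum_strictMono hWinf).injective h), himg]
  have hb1 : ∀ j, ‖((S1 j).card : ℝ)⁻¹ • ∑ k ∈ Finset.range (S1 j).card, y (enum W k) - l‖
      ≤ ε/8 := by
    intro j
    have hcard0 : (S1 j).card ≠ 0 := by have := hc1 j; omega
    have hcpos : (0:ℝ) < ((S1 j).card : ℝ) := by exact_mod_cast Nat.pos_of_ne_zero hcard0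
    rw [hmean_at (S1 j) (hinitS1 j) hcard0, norm_smul, Real.norm_eq_abs, abs_inv, Nat.abs_cast]
    rw [inv_mul_le_iff₀ hcpos]
    calc ‖∑ i ∈ S1 j, (y i - l)‖ ≤ ε/8 * (S1 j).card := hbound1 (SS j)
      _ = (S1 j).card * (ε/8) := by ring
  have hb2 : ∀ j, ε/2
      ≤ ‖((SS (j+1)).card : ℝ)⁻¹ • ∑ k ∈ Finset.range (SS (j+1)).card, y (enum W k) - l‖ := by
    intro j
    have hcard0 : (SS (j+1)).card ≠ 0 := by have := hc1 j; have := hc2 j; omega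
    have hcpos : (0:ℝ) < ((SS (j+1)).card : ℝ) := by exact_mod_cast Nat.pos_of_ne_zero hcard0
    rw [hmean_at (SS (j+1)) (hinitSS (j+1)) hcard0, norm_smul, Real.norm_eq_abs, abs_inv,
      Nat.abs_cast]
    rw [le_inv_mul_iff₀ hcpos]
    calc ((SS (j+1)).card : ℝ) * (ε/2) = ε/2 * (SS (j+1)).card := by ring
      _ ≤ ‖∑ i ∈ SS (j+1), (y i - l)‖ := by
          have := hbound2 (SS j)
          rw [← hSSsucc j] at this
          exact this
  have hn1top : Filter.Tendsto (fun j => (S1 j).card) Filter.atTop Filter.atTop := by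
    apply Filter.tendsto_atTop_mono (fun j => ?_) Filter.tendsto_id
    have := hcard_ge j
    have := hc1 j
    simp only [id_eq]
    omega
  have hn2top : Filter.Tendsto (fun j => (SS (j+1)).card) Filter.atTop Filter.atTop := by
    apply Filter.tendsto_atTop_mono (fun j => ?_) Filter.tendsto_id
    have := hcard_ge j
    have := hc1 j
    have := hc2 j
    simp only [id_eq]
    omega
  have hlim1 : Filter.Tendsto
      (fun j => ‖((S1 j).card : ℝ)⁻¹ • ∑ k ∈ Finset.range (S1 j).card, y (enum W k) - l‖)
      Filter.atTop (nhds ‖l' - l‖) := ((hl'.comp hn1top).sub_const l).norm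
  have hlim2 : Filter.Tendsto
      (fun j => ‖((SS (j+1)).card : ℝ)⁻¹ • ∑ k ∈ Finset.range (SS (j+1)).card, y (enum W k) - l‖)
      Filter.atTop (nhds ‖l' - l‖) := ((hl'.comp hn2top).sub_const l).norm
  have g1 : ‖l' - l‖ ≤ ε/8 := le_of_tendsto hlim1 (Filter.Eventually.of_forall hb1)
  have g2 : ε/2 ≤ ‖l' - l‖ := ge_of_tendsto hlim2 (Filter.Eventually.of_forall hb2)
  linarith

end Analysis4

end BS5


/-- A bounded subset `A` of a real Banach space `X` is a Banach–Saks set (every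
sequence in `A` has a Cesàro convergent subsequence) if and only if every sequence in `A` has a
subsequence converging uniformly weakly to some point of `X`. -/
theorem statement5 {X : Type*} [NormedAddCommGroup X] [NormedSpace ℝ X] [CompleteSpace X]
    (A : Set X) (hA : Bornology.IsBounded A) :
    (∀ x : ℕ → X, (∀ n, x n ∈ A) →
        ∃ φ : ℕ → ℕ, StrictMono φ ∧ ∃ l : X, CesaroConvergent (x ∘ φ) l) ↔
      (∀ x : ℕ → X, (∀ n, x n ∈ A) →
        ∃ φ : ℕ → ℕ, StrictMono φ ∧ ∃ l : X, UnifWeaklyConvergent (x ∘ φ) l) := by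
  classical
  obtain ⟨C, hCbd⟩ := isBounded_iff_forall_norm_le.1 hA
  constructor
  · -- Banach–Saks ⇒ uniformly weakly convergent subsequences
    intro hBS x hx
    obtain ⟨N, hNinf, hNcase⟩ := BS5.means_dichotomy x
    have hNF : BS5.cube ∅ N ⊆ BS5.Ffam x := by
      rcases hNcase with h | h
      · exact h
      · exfalso
        obtain ⟨φ, hφ, lc, hlc⟩ := hBS (x ∘ BS5.enum N) (fun n => hx _)
        set g : ℕ → ℕ := BS5.enum N ∘ φ with hg
        have hgmono : StrictMono g := (BS5.enum_strictMono hNinf).comp hφ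
        have hWmem : Set.range g ∈ BS5.cube ∅ N :=
          BS5.mem_cube_empty (Set.infinite_range_of_injective hgmono.injective)
            (by rintro z ⟨k, rfl⟩; exact BS5.enum_mem hNinf (φ k))
        have hmu : ∀ n, BS5.mu x (Set.range g) n
            = (n : ℝ)⁻¹ • ∑ i ∈ Finset.range n, ((x ∘ BS5.enum N) ∘ φ) i := by
          intro n
          rw [BS5.mu_range x g hgmono]
          rfl
        have ht : Tendsto (fun n => BS5.mu x (Set.range g) n) atTop (nhds lc) :=
          hlc.congr (fun n => (hmu n).symm)
        have hWF : Set.range g ∈ BS5.Ffam x := by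
          refine ⟨Set.infinite_range_of_injective hgmono.injective, ?_⟩
          intro k
          rw [Metric.tendsto_atTop] at ht
          obtain ⟨n₀, hn₀⟩ := ht (((k : ℝ) + 1)⁻¹/2) (by positivity)
          refine ⟨n₀, fun m hm => ?_⟩
          have h1 := hn₀ m hm
          have h2 := hn₀ n₀ le_rfl
          rw [dist_eq_norm] at h1 h2
          calc ‖BS5.mu x (Set.range g) m - BS5.mu x (Set.range g) n₀‖
              ≤ ‖BS5.mu x (Set.range g) m - lc‖ + ‖BS5.mu x (Set.range g) n₀ - lc‖ := by
                have := norm_sub_le_norm_sub_add_norm_sub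
                  (BS5.mu x (Set.range g) m) lc (BS5.mu x (Set.range g) n₀)
                have hrev : ‖lc - BS5.mu x (Set.range g) n₀‖
                    = ‖BS5.mu x (Set.range g) n₀ - lc‖ := norm_sub_rev _ _
                linarith
            _ ≤ ((k : ℝ) + 1)⁻¹ := by linarith
        exact (Set.eq_empty_iff_forall_notMem.1 h) _ ⟨hWmem, hWF⟩
    set y : ℕ → X := x ∘ BS5.enum N with hy
    have hstar : ∀ ψ : ℕ → ℕ, StrictMono ψ →
        ∃ l', Tendsto (fun n : ℕ => (n : ℝ)⁻¹ • ∑ k ∈ Finset.range n, y (ψ k))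
          atTop (nhds l') := by
      intro ψ hψ
      set g : ℕ → ℕ := BS5.enum N ∘ ψ with hg
      have hgmono : StrictMono g := (BS5.enum_strictMono hNinf).comp hψ
      have hWmem : Set.range g ∈ BS5.cube ∅ N :=
        BS5.mem_cube_empty (Set.infinite_range_of_injective hgmono.injective)
          (by rintro z ⟨k, rfl⟩; exact BS5.enum_mem hNinf (ψ k))
      obtain ⟨-, hcauchy⟩ := hNF hWmem
      have hcs : CauchySeq (fun n => BS5.mu x (Set.range g) n) := by
        rw [Metric.cauchySeq_iff']
        intro ε hε
        obtain ⟨k, hk⟩ := exists_nat_one_div_lt hε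
        obtain ⟨n, hn⟩ := hcauchy k
        refine ⟨n, fun m hm => ?_⟩
        rw [dist_eq_norm]
        calc ‖BS5.mu x (Set.range g) m - BS5.mu x (Set.range g) n‖ ≤ ((k : ℝ) + 1)⁻¹ :=
              hn m hm
          _ = 1/((k : ℝ) + 1) := by rw [one_div]
          _ < ε := hk
      obtain ⟨l', hl'⟩ := cauchySeq_tendsto_of_complete hcs
      refine ⟨l', hl'.congr (fun n => ?_)⟩
      rw [BS5.mu_range x g hgmono]
      rfl
    obtain ⟨l₀, hl₀⟩ := hstar id strictMono_id
    have hl₀' : Tendsto (fun n : ℕ => (n : ℝ)⁻¹ • ∑ k ∈ Finset.range n, y k)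
        atTop (nhds l₀) := by simpa using hl₀
    have hyC : ∀ n, ‖y n - l₀‖ ≤ C + ‖l₀‖ := fun n =>
      (norm_sub_le _ _).trans (add_le_add_left (hCbd _ (hx (BS5.enum N n))) _)
    exact ⟨BS5.enum N, BS5.enum_strictMono hNinf, l₀,
      BS5.unifWeakly_of_all_subseq hyC hl₀' hstar⟩
  · -- uniformly weakly convergent subsequences ⇒ Banach–Saks
    intro hUW x hx
    obtain ⟨φ, hφ, l, hl⟩ := hUW x hx
    refine ⟨φ, hφ, l, BS5.cesaro_of_unifWeakly (C := C + ‖l‖) (fun n => ?_) hl⟩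
    exact (norm_sub_le _ _).trans (add_le_add_left (hCbd _ (hx (φ n))) _)
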